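/- Let f ∈ ℚ[T] be a monic squarefree polynomial with roots α₁,…,α_r in ℚ̄ and let t be the image of T in E_f = ℚ[T]/(f). Then E_f is a finite product of number fields and there exists an integer n₀ ≥ 1 such that the intersection of the subrings ℚ[t^n] over all n ≥ 1 equals ℚ[t^{n₀}]. -/

import Mathlib

open Polynomial

section Aux

variable {p : ℚ[X]}

/-- The quotient by an irreducible polynomial embeds into `ℂ` with image a finite-dimensional
subfield. -/
lemma aux_embed (hp : Irreducible p) :
    ∃ K : Subfield ℂ, FiniteDimensional ℚ K ∧
      Nonempty ((ℚ[X] ⧸ Ideal.span {p}) ≃+* K) := by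
  haveI hmax : (Ideal.span {p}).IsMaximal :=
    PrincipalIdealRing.isMaximal_of_irreducible hp
  letI : Field (ℚ[X] ⧸ Ideal.span {p}) := Ideal.Quotient.field _
  haveI : FiniteDimensional ℚ (ℚ[X] ⧸ Ideal.span {p}) :=
    (AdjoinRoot.powerBasis hp.ne_zero).finite
  haveI : Algebra.IsAlgebraic ℚ (ℚ[X] ⧸ Ideal.span {p}) :=
    Algebra.IsAlgebraic.of_finite _ _
  let φ : (ℚ[X] ⧸ Ideal.span {p}) →ₐ[ℚ] ℂ := IsAlgClosed.lift
  refine ⟨φ.toRingHom.fieldRange, ?_, ?_⟩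
  · have hinj : Function.Injective φ.toRingHom := φ.toRingHom.injective
    have e : (ℚ[X] ⧸ Ideal.span {p}) ≃+* φ.toRingHom.fieldRange := by
      refine RingEquiv.ofBijective φ.toRingHom.rangeRestrictField ⟨?_, ?_⟩
      · intro x y hxy
        apply hinj
        have := congrArg Subtype.val hxy
        exact this
      · rintro ⟨y, x, rfl⟩
        exact ⟨x, rfl⟩
    have efin : FiniteDimensional ℚ (ℚ[X] ⧸ Ideal.span {p}) := inferInstance
    exact Module.Finite.of_surjective e.toRingHom.toRatAlgHom.toLinearMap e.surjective
  · have hinj : Function.Injective φ.toRingHom := φ.toRingHom.injective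
    refine ⟨RingEquiv.ofBijective φ.toRingHom.rangeRestrictField ⟨?_, ?_⟩⟩
    · intro x y hxy
      apply hinj
      have := congrArg Subtype.val hxy
      exact this
    · rintro ⟨y, x, rfl⟩
      exact ⟨x, rfl⟩

end Aux

/-- In a finite-dimensional `ℚ`-algebra, the intersection of the subalgebras generated by
the powers `t ^ n`, `n ≥ 1`, is attained at some `n₀ ≥ 1`. -/
lemma aux_part2 {A : Type*} [CommRing A] [Algebra ℚ A] [FiniteDimensional ℚ A] (t : A) :
    ∃ n₀ : ℕ, 1 ≤ n₀ ∧
      (⨅ (n : ℕ) (_ : 1 ≤ n), Algebra.adjoin ℚ {t ^ n}) = Algebra.adjoin ℚ {t ^ n₀} := by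
  have key : ∀ a b : ℕ, Algebra.adjoin ℚ {t ^ (a * b)} ≤ Algebra.adjoin ℚ {t ^ a} := by
    intro a b
    have ht : t ^ a ∈ Algebra.adjoin ℚ {t ^ a} := Algebra.subset_adjoin (Set.mem_singleton _)
    rw [Algebra.adjoin_le_iff, Set.singleton_subset_iff, SetLike.mem_coe, pow_mul]
    exact pow_mem ht b
  set d : ℕ → ℕ := fun n => Module.finrank ℚ (Algebra.adjoin ℚ {t ^ n}) with hd
  have hne : (Set.range fun n : {n : ℕ // 1 ≤ n} => d n).Nonempty := ⟨d 1, ⟨1, le_refl 1⟩, rfl⟩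
  obtain ⟨⟨n₀, hn₀⟩, hdn₀⟩ := Nat.sInf_mem hne
  refine ⟨n₀, hn₀, ?_⟩
  apply le_antisymm
  · exact iInf_le_of_le n₀ (iInf_le_of_le hn₀ le_rfl)
  · refine le_iInf fun n => le_iInf fun hn => ?_
    have h1 : Algebra.adjoin ℚ {t ^ (n₀ * n)} ≤ Algebra.adjoin ℚ {t ^ n₀} := key n₀ n
    have h2 : Algebra.adjoin ℚ {t ^ (n₀ * n)} ≤ Algebra.adjoin ℚ {t ^ n} := by
      rw [mul_comm]; exact key n n₀
    have h3 : d n₀ ≤ d (n₀ * n) := by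
      have h5 : sInf (Set.range fun n : {n : ℕ // 1 ≤ n} => d n) ≤ d (n₀ * n) :=
        Nat.sInf_le ⟨⟨n₀ * n, le_mul_of_le_of_one_le hn₀ hn⟩, rfl⟩
      calc d n₀ = _ := hdn₀
        _ ≤ _ := h5
    have h4 : Algebra.adjoin ℚ {t ^ n₀} = Algebra.adjoin ℚ {t ^ (n₀ * n)} := by
      have := Submodule.eq_of_le_of_finrank_le
        (Subalgebra.toSubmodule.monotone h1) h3
      exact le_antisymm (Subalgebra.toSubmodule_injective this).ge h1
    rw [h4]
    exact h2



theorem stmt_10 (f : ℚ[X]) (hmonic : f.Monic) (hsqfree : Squarefree f) :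
    (∃ (ι : Type) (_ : Fintype ι) (K : ι → Subfield ℂ),
      (∀ i, FiniteDimensional ℚ (K i)) ∧
      Nonempty ((ℚ[X] ⧸ Ideal.span {f}) ≃+* ((i : ι) → K i))) ∧
    (∃ n₀ : ℕ, 1 ≤ n₀ ∧
      (⨅ (n : ℕ) (_ : 1 ≤ n),
          Algebra.adjoin ℚ {(Ideal.Quotient.mk (Ideal.span {f}) X) ^ n}) =
        Algebra.adjoin ℚ {(Ideal.Quotient.mk (Ideal.span {f}) X) ^ n₀}) := by
  have hf0 : f ≠ 0 := hmonic.ne_zero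
  constructor
  · -- Part 1 : product of number fields
    by_cases hu : IsUnit f
    · -- f = 1, quotient is trivial
      have : Ideal.span {f} = ⊤ := Ideal.span_singleton_eq_top.mpr hu
      haveI : Subsingleton (ℚ[X] ⧸ Ideal.span {f}) := by
        rw [this]; exact Ideal.Quotient.subsingleton_iff.mpr rfl
      haveI : Unique (ℚ[X] ⧸ Ideal.span {f}) := Unique.mk' _
      exact ⟨Empty, inferInstance, fun i => i.elim, fun i => i.elim,
        ⟨RingEquiv.ofUnique⟩⟩
    · classical
      set s := (UniqueFactorizationMonoid.normalizedFactors f).toFinset with hs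
      have hnodup : (UniqueFactorizationMonoid.normalizedFactors f).Nodup :=
        (UniqueFactorizationMonoid.squarefree_iff_nodup_normalizedFactors hf0).mp hsqfree
      have hirr : ∀ p ∈ s, Irreducible p := fun p hp =>
        UniqueFactorizationMonoid.irreducible_of_normalized_factor p
          (Multiset.mem_toFinset.mp hp)
      have hnorm : ∀ p ∈ s, normalize p = p := fun p hp =>
        UniqueFactorizationMonoid.normalize_normalized_factor p (Multiset.mem_toFinset.mp hp)
      -- pairwise coprime
      have hcop : ∀ p ∈ s, ∀ q ∈ s, p ≠ q → IsCoprime p q := by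
        intro p hp q hq hne
        refine (hirr p hp).coprime_iff_not_dvd.mpr ?_
        intro hdvd
        have hassoc : Associated p q :=
          (hirr p hp).associated_of_dvd (hirr q hq) hdvd
        have : normalize p = normalize q := normalize_eq_normalize hdvd hassoc.symm.dvd
        rw [hnorm p hp, hnorm q hq] at this
        exact hne this
      -- the ideal decomposition
      have hspan : Ideal.span {f} = ⨅ i : {p // p ∈ s}, Ideal.span {(i : ℚ[X])} := by
        rw [Ideal.iInf_span_singleton]
        · apply Ideal.span_singleton_eq_span_singleton.mpr
          have h1 : (∏ i : {p // p ∈ s}, (i : ℚ[X])) = ∏ p ∈ s, p := by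
            exact Finset.prod_coe_sort s id
          have h2 : (∏ p ∈ s, p) = (UniqueFactorizationMonoid.normalizedFactors f).prod := by
            rw [Finset.prod]
            congr 1
            rw [hs, Multiset.toFinset_val, hnodup.dedup, Multiset.map_id']
          rw [h1, h2]
          exact (UniqueFactorizationMonoid.prod_normalizedFactors hf0).symm
        · intro i j hij
          exact hcop i i.2 j j.2 (fun h => hij (Subtype.ext h))
      choose K hKfin hKequiv using
        fun i : {p // p ∈ s} => aux_embed (hirr i i.2)
      refine ⟨{p // p ∈ s}, inferInstance, K, hKfin, ?_⟩
      have e1 : (ℚ[X] ⧸ Ideal.span {f}) ≃+*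
          ((i : {p // p ∈ s}) → ℚ[X] ⧸ Ideal.span {(i : ℚ[X])}) :=
        (Ideal.quotEquivOfEq hspan).trans
          (Ideal.quotientInfRingEquivPiQuotient _
            (fun i j hij => (Ideal.isCoprime_span_singleton_iff _ _).mpr
              (hcop i i.2 j j.2 (fun h => hij (Subtype.ext h)))))
      exact ⟨e1.trans (RingEquiv.piCongrRight fun i => (hKequiv i).some)⟩
  · -- Part 2 : stabilization of the intersection
    haveI : FiniteDimensional ℚ (ℚ[X] ⧸ Ideal.span {f}) := by
      refine PowerBasis.finite ?_
      refine AdjoinRoot.powerBasis ?_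
      exact hf0
    exact aux_part2 _
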